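/- Let d ≥ 1 be a natural number, let ζ_d ∈ ℂ be a primitive d-th root of unity, and let ℤ[ζ_d] denote the subring of ℂ generated by ζ_d. Then the following statements are equivalent: (i) for every n ≥ 1, the set of restrictions to the band B_n = {(i,j) ∈ ℤ² : i ≤ j ≤ i+n+3} of frieze patterns of height n over ℤ[ζ_d] \ {0} is finite; (ii) ℤ[ζ_d] is a discrete subset of ℂ (it has no accumulation point in ℂ); (iii) the group of units of the ring ℤ[ζ_d] is finite; (iv) d ∈ {1, 2, 3, 4, 6}. -/

import Mathlib

/-- A frieze pattern of height `n` over a subset `S ⊆ ℂ`. -/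
def IsFrieze (n : ℕ) (S : Set ℂ) (c : ℤ × ℤ → ℂ) : Prop :=
  (∀ i : ℤ, c (i, i) = 0) ∧
  (∀ i : ℤ, c (i, i + 1) = 1) ∧
  (∀ i : ℤ, c (i, i + n + 2) = 1) ∧
  (∀ i : ℤ, c (i, i + n + 3) = 0) ∧
  (∀ i j : ℤ, i + 2 ≤ j → j ≤ i + n + 1 → c (i, j) ∈ S) ∧
  (∀ i j : ℤ, i + 1 ≤ j → j ≤ i + n + 2 →
    c (i, j) * c (i + 1, j + 1) - c (i, j + 1) * c (i + 1, j) = 1)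

open Complex

noncomputable def Complex.abs : AbsoluteValue ℂ ℝ := IsAbsoluteValue.toAbsoluteValue (norm : ℂ → ℝ)

theorem Complex.abs_apply' (z : ℂ) : Complex.abs z = ‖z‖ := rfl

theorem Complex.sq_abs (z : ℂ) : Complex.abs z ^ 2 = normSq z := Complex.sq_norm z

theorem Complex.abs_intCast (n : ℤ) : Complex.abs (n : ℂ) = |(n : ℝ)| := by
  rw [Complex.abs_apply', Complex.norm_intCast]

theorem Complex.abs_im_le_abs (z : ℂ) : |z.im| ≤ Complex.abs z := Complex.abs_im_le_norm z

lemma zeta_ne_zero {d : ℕ} {ζ : ℂ} (hd : 1 ≤ d) (hζ : ζ ^ d = 1) : ζ ≠ 0 := by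
  intro h
  rw [h, zero_pow (by omega)] at hζ
  exact zero_ne_one hζ

lemma zeta_abs {d : ℕ} {ζ : ℂ} (hd : 1 ≤ d) (hζ : ζ ^ d = 1) : Complex.abs ζ = 1 := by
  have h : (Complex.abs ζ) ^ d = 1 := by
    rw [← map_pow, hζ, map_one]
  have h0 : 0 ≤ Complex.abs ζ := AbsoluteValue.nonneg _ _
  rcases lt_trichotomy (Complex.abs ζ) 1 with hlt | heq | hgt
  · have := pow_lt_one₀ h0 hlt (by omega : d ≠ 0)
    linarith
  · exact heq
  · have := one_lt_pow₀ hgt (by omega : d ≠ 0)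
    linarith

lemma zeta_order {d : ℕ} {ζ : ℂ} (hd : 1 ≤ d) (hζ : ζ ^ d = 1)
    (hprim : ∀ k : ℕ, 1 ≤ k → k < d → ζ ^ k ≠ 1) (k : ℕ) (hk : ζ ^ k = 1) : d ∣ k := by
  have h1 : ζ ^ (k % d) = 1 := by
    conv at hk => rw [← Nat.div_add_mod k d]
    rw [pow_add, pow_mul, hζ, one_pow, one_mul] at hk
    exact hk
  rcases Nat.eq_zero_or_pos (k % d) with h | h
  · exact Nat.dvd_of_mod_eq_zero h
  · exact absurd h1 (hprim _ h (Nat.mod_lt _ (by omega)))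


-- master structural lemma for d ∈ {1,2,3,4,6}
lemma zeta_cases {d : ℕ} {ζ : ℂ} (hd : 1 ≤ d) (hζ : ζ ^ d = 1)
    (hprim : ∀ k : ℕ, 1 ≤ k → k < d → ζ ^ k ≠ 1) (hd4 : d ∈ ({1, 2, 3, 4, 6} : Set ℕ)) :
    (ζ = 1 ∨ ζ = -1) ∨ ∃ q : ℤ, ζ ^ 2 = -1 + (q : ℂ) * ζ ∧ q ^ 2 ≤ 1 := by
  simp only [Set.mem_insert_iff, Set.mem_singleton_iff] at hd4
  rcases hd4 with rfl | rfl | rfl | rfl | rfl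
  · left; left; simpa using hζ
  · left; right
    have h1 : ζ ≠ 1 := by simpa using hprim 1 (by norm_num) (by norm_num)
    have : (ζ - 1) * (ζ + 1) = 0 := by linear_combination hζ
    rcases mul_eq_zero.mp this with h | h
    · exact absurd (sub_eq_zero.mp h) h1
    · linear_combination h
  · right; refine ⟨-1, ?_, by norm_num⟩
    have h1 : ζ ≠ 1 := by simpa using hprim 1 (by norm_num) (by norm_num)
    have : (ζ - 1) * (ζ ^ 2 + ζ + 1) = 0 := by linear_combination hζ
    rcases mul_eq_zero.mp this with h | h
    · exact absurd (sub_eq_zero.mp h) h1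
    · push_cast; linear_combination h
  · right; refine ⟨0, ?_, by norm_num⟩
    have h2 : ζ ^ 2 ≠ 1 := hprim 2 (by norm_num) (by norm_num)
    have : (ζ ^ 2 - 1) * (ζ ^ 2 + 1) = 0 := by linear_combination hζ
    rcases mul_eq_zero.mp this with h | h
    · exact absurd (sub_eq_zero.mp h) h2
    · push_cast; linear_combination h
  · right; refine ⟨1, ?_, by norm_num⟩
    have h3 : ζ ^ 3 ≠ 1 := hprim 3 (by norm_num) (by norm_num)
    have h2 : ζ ^ 2 ≠ 1 := hprim 2 (by norm_num) (by norm_num)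
    have hy : (ζ ^ 3 - 1) * (ζ ^ 3 + 1) = 0 := by linear_combination hζ
    have h31 : ζ ^ 3 = -1 := by
      rcases mul_eq_zero.mp hy with h | h
      · exact absurd (sub_eq_zero.mp h) h3
      · linear_combination h
    have hne : ζ ≠ -1 := by
      intro h; apply h2; rw [h]; ring
    have : (ζ + 1) * (ζ ^ 2 - ζ + 1) = 0 := by linear_combination h31
    rcases mul_eq_zero.mp this with h | h
    · exact absurd (by linear_combination h : ζ = -1) hne
    · push_cast; linear_combination h

-- representation: every element of closure is a + b ζ
lemma lattice_rep {ζ : ℂ} {p q : ℤ} (hsq : ζ ^ 2 = (p : ℂ) + (q : ℂ) * ζ) :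
    ∀ x ∈ Subring.closure ({ζ} : Set ℂ), ∃ a b : ℤ, x = (a : ℂ) + (b : ℂ) * ζ := by
  intro x hx
  induction hx using Subring.closure_induction with
  | mem y hy =>
      rw [Set.mem_singleton_iff] at hy
      exact ⟨0, 1, by rw [hy]; push_cast; ring⟩
  | zero => exact ⟨0, 0, by push_cast; ring⟩
  | one => exact ⟨1, 0, by push_cast; ring⟩
  | add y z hy hz ihy ihz =>
      obtain ⟨a, b, rfl⟩ := ihy
      obtain ⟨a', b', rfl⟩ := ihz
      exact ⟨a + a', b + b', by push_cast; ring⟩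
  | neg y hy ihy =>
      obtain ⟨a, b, rfl⟩ := ihy
      exact ⟨-a, -b, by push_cast; ring⟩
  | mul y z hy hz ihy ihz =>
      obtain ⟨a, b, rfl⟩ := ihy
      obtain ⟨a', b', rfl⟩ := ihz
      refine ⟨a * a' + b * b' * p, a * b' + a' * b + b * b' * q, ?_⟩
      push_cast
      linear_combination (b : ℂ) * (b' : ℂ) * hsq

-- trace: ζ + conj ζ = t, integer with t² ≤ 4
lemma zeta_trace {d : ℕ} {ζ : ℂ} (hd : 1 ≤ d) (hζ : ζ ^ d = 1)
    (hcases : (ζ = 1 ∨ ζ = -1) ∨ ∃ q : ℤ, ζ ^ 2 = -1 + (q : ℂ) * ζ ∧ q ^ 2 ≤ 1) :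
    ∃ t : ℤ, ζ + (starRingEnd ℂ) ζ = (t : ℂ) := by
  rcases hcases with (rfl | rfl) | ⟨q, hq, _⟩
  · exact ⟨2, by rw [map_one]; norm_num⟩
  · exact ⟨-2, by rw [map_neg, map_one]; norm_num⟩
  · refine ⟨q, ?_⟩
    have hz0 : ζ ≠ 0 := zeta_ne_zero hd hζ
    have habs : Complex.abs ζ = 1 := zeta_abs hd hζ
    have hw : ζ * (starRingEnd ℂ) ζ = 1 := by
      rw [Complex.mul_conj]; norm_cast; rw [← Complex.sq_abs, habs]; norm_num
    have : (ζ + (starRingEnd ℂ) ζ - (q : ℂ)) * ζ = 0 := by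
      linear_combination hq + hw - hζ + hζ
    rcases mul_eq_zero.mp this with h | h
    · linear_combination h
    · exact absurd h hz0

lemma min_norm {d : ℕ} {ζ : ℂ} (hd : 1 ≤ d) (hζ : ζ ^ d = 1) {t : ℤ}
    (ht : ζ + (starRingEnd ℂ) ζ = (t : ℂ))
    {x : ℂ} (a b : ℤ) (hx : x = (a : ℂ) + (b : ℂ) * ζ) (hx0 : x ≠ 0) :
    1 ≤ Complex.abs x := by
  have habs : Complex.abs ζ = 1 := zeta_abs hd hζ
  have hw : ζ * (starRingEnd ℂ) ζ = 1 := by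
    rw [Complex.mul_conj]; norm_cast; rw [← Complex.sq_abs, habs]; norm_num
  have hconjx : (starRingEnd ℂ) x = (a : ℂ) + (b : ℂ) * (starRingEnd ℂ) ζ := by
    rw [hx, map_add, map_mul]; norm_num
  set m : ℤ := a ^ 2 + a * b * t + b ^ 2 with hm
  have key : (Complex.normSq x : ℂ) = (m : ℂ) := by
    rw [← Complex.mul_conj, hconjx, hx, hm]
    push_cast
    linear_combination ((a : ℂ) * (b : ℂ)) * ht + ((b : ℂ) * (b : ℂ)) * hw
  have keyR : (Complex.normSq x : ℝ) = (m : ℝ) := by exact_mod_cast key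
  have h0 : 0 ≤ m := by
    have := Complex.normSq_nonneg x
    rw [keyR] at this; exact_mod_cast this
  have hne : m ≠ 0 := by
    intro h
    apply hx0
    rw [← Complex.normSq_eq_zero]
    rw [keyR, h]; norm_num
  have h1 : (1 : ℝ) ≤ Complex.normSq x := by
    rw [keyR]; exact_mod_cast (by omega : 1 ≤ m)
  rw [← Complex.sq_abs] at h1
  nlinarith [Complex.abs.nonneg x]

lemma box_finite {d : ℕ} {ζ : ℂ} (hd : 1 ≤ d) (hζ : ζ ^ d = 1)
    (hcases : (ζ = 1 ∨ ζ = -1) ∨ ∃ q : ℤ, ζ ^ 2 = -1 + (q : ℂ) * ζ ∧ q ^ 2 ≤ 1)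
    (B : ℝ) :
    {x : ℂ | x ∈ Subring.closure ({ζ} : Set ℂ) ∧ Complex.abs x ≤ B}.Finite := by
  rcases lt_or_ge B 0 with hB | hB
  · apply Set.Finite.subset Set.finite_empty
    intro x ⟨_, hx⟩
    exact absurd (lt_of_le_of_lt hx hB) (not_lt.mpr (Complex.abs.nonneg x))
  have habs : Complex.abs ζ = 1 := zeta_abs hd hζ
  rcases hcases with hreal | ⟨q, hq, hq1⟩
  · -- real case : closure consists of integers
    have hsq : ζ ^ 2 = ((1 : ℤ) : ℂ) + ((0 : ℤ) : ℂ) * ζ := by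
      rcases hreal with rfl | rfl <;> norm_num
    apply Set.Finite.subset ((Set.finite_Icc (-⌈B⌉) ⌈B⌉).image (fun k : ℤ => (k : ℂ)))
    rintro x ⟨hxc, hxB⟩
    obtain ⟨a, b, rfl⟩ := lattice_rep hsq x hxc
    have : ∃ k : ℤ, (a : ℂ) + (b : ℂ) * ζ = (k : ℂ) := by
      rcases hreal with rfl | rfl
      · exact ⟨a + b, by push_cast; ring⟩
      · exact ⟨a - b, by push_cast; ring⟩
    obtain ⟨k, hk⟩ := this
    rw [hk] at hxB ⊢
    rw [Complex.abs_intCast] at hxB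
    refine ⟨k, ?_, rfl⟩
    constructor
    · have : -(k:ℝ) ≤ B := by cases abs_cases (k:ℝ) <;> linarith [abs_le.mp (le_refl |(k:ℝ)|)]
      have h2 : ((-⌈B⌉ : ℤ) : ℝ) ≤ (k : ℝ) := by
        push_cast
        linarith [Int.le_ceil B, neg_abs_le (k:ℝ)]
      exact_mod_cast h2
    · have h2 : ((k : ℤ) : ℝ) ≤ ((⌈B⌉ : ℤ) : ℝ) := by
        push_cast
        linarith [Int.le_ceil B, le_abs_self (k:ℝ)]
      exact_mod_cast h2
  · -- complex case
    have hz0 : ζ ≠ 0 := zeta_ne_zero hd hζ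
    have ht : ζ + (starRingEnd ℂ) ζ = ((q : ℤ) : ℂ) := by
      have hw : ζ * (starRingEnd ℂ) ζ = 1 := by
        rw [Complex.mul_conj]; norm_cast; rw [← Complex.sq_abs, habs]; norm_num
      have h0 : (ζ + (starRingEnd ℂ) ζ - (q : ℂ)) * ζ = 0 := by
        linear_combination hq + hw
      rcases mul_eq_zero.mp h0 with h | h
      · linear_combination h
      · exact absurd h hz0
    have hre : ζ.re = (q : ℝ) / 2 := by
      have := Complex.add_conj ζ
      rw [ht] at this
      push_cast at this
      have h2 : ((2 * ζ.re : ℝ) : ℂ) = ((q : ℝ) : ℂ) := by push_cast; exact_mod_cast this.symm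
      have := Complex.ofReal_inj.mp h2
      linarith
    have hnormsq : ζ.re ^ 2 + ζ.im ^ 2 = 1 := by
      have := Complex.sq_abs ζ
      rw [habs] at this
      rw [Complex.normSq_apply] at this
      nlinarith
    have him : 1 / 2 ≤ |ζ.im| := by
      have hq2 : (q : ℝ) ^ 2 ≤ 1 := by exact_mod_cast hq1
      have : ζ.im ^ 2 ≥ 3 / 4 := by rw [hre] at hnormsq; nlinarith
      nlinarith [abs_nonneg ζ.im, _root_.sq_abs ζ.im]
    -- bound coefficients
    have hsq : ζ ^ 2 = ((-1 : ℤ) : ℂ) + ((q : ℤ) : ℂ) * ζ := by push_cast; exact hq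
    set M : ℤ := ⌈2 * B⌉ with hM
    set N : ℤ := ⌈3 * B⌉ with hN
    apply Set.Finite.subset (((Set.finite_Icc (-N) N).prod (Set.finite_Icc (-M) M)).image
      (fun ab : ℤ × ℤ => (ab.1 : ℂ) + (ab.2 : ℂ) * ζ))
    rintro x ⟨hxc, hxB⟩
    obtain ⟨a, b, rfl⟩ := lattice_rep hsq x hxc
    have him_x : ((a : ℂ) + (b : ℂ) * ζ).im = (b : ℝ) * ζ.im := by
      simp [Complex.add_im, Complex.mul_im]
    have hb : |(b : ℝ)| ≤ 2 * B := by
      have h1 : |(b : ℝ)| * |ζ.im| ≤ B := by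
        rw [← abs_mul, ← him_x]
        exact le_trans (Complex.abs_im_le_abs _) hxB
      nlinarith [abs_nonneg (b : ℝ)]
    have ha : |(a : ℝ)| ≤ 3 * B := by
      have h1 : (a : ℂ) = ((a : ℂ) + (b : ℂ) * ζ) - (b : ℂ) * ζ := by ring
      have h2 : Complex.abs (a : ℂ) ≤ B + |(b : ℝ)| := by
        rw [h1]
        refine le_trans (Complex.abs.sub_le_add _ _) ?_
        gcongr
        rw [map_mul, habs, mul_one, Complex.abs_intCast]
      rw [Complex.abs_intCast] at h2
      linarith
    refine ⟨(a, b), ⟨⟨?_, ?_⟩, ⟨?_, ?_⟩⟩, rfl⟩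
    · have : ((-N : ℤ) : ℝ) ≤ (a : ℝ) := by
        push_cast
        linarith [Int.le_ceil (3 * B), neg_abs_le (a : ℝ)]
      exact_mod_cast this
    · have : ((a : ℤ) : ℝ) ≤ ((N : ℤ) : ℝ) := by
        push_cast
        linarith [Int.le_ceil (3 * B), le_abs_self (a : ℝ)]
      exact_mod_cast this
    · have : ((-M : ℤ) : ℝ) ≤ (b : ℝ) := by
        push_cast
        linarith [Int.le_ceil (2 * B), neg_abs_le (b : ℝ)]
      exact_mod_cast this
    · have : ((b : ℤ) : ℝ) ≤ ((M : ℤ) : ℝ) := by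
        push_cast
        linarith [Int.le_ceil (2 * B), le_abs_self (b : ℝ)]
      exact_mod_cast this

lemma discrete_of_min_norm {R : Subring ℂ}
    (hmin : ∀ y ∈ R, y ≠ 0 → 1 ≤ Complex.abs y) (x : ℂ) :
    ¬ AccPt x (Filter.principal (R : Set ℂ)) := by
  intro hacc
  rw [accPt_iff_nhds] at hacc
  obtain ⟨y₁, ⟨hy₁U, hy₁C⟩, hy₁x⟩ := hacc (Metric.ball x (1/2)) (Metric.ball_mem_nhds x (by norm_num))
  have hr : 0 < dist y₁ x := dist_pos.mpr hy₁x
  obtain ⟨y₂, ⟨hy₂U, hy₂C⟩, hy₂x⟩ := hacc (Metric.ball x (dist y₁ x)) (Metric.ball_mem_nhds x hr)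
  rw [Metric.mem_ball] at hy₁U hy₂U
  have hne : y₁ ≠ y₂ := by
    intro h; rw [h] at hy₂U; exact lt_irrefl _ hy₂U
  have hz : y₁ - y₂ ∈ R := sub_mem hy₁C hy₂C
  have hz0 : y₁ - y₂ ≠ 0 := sub_ne_zero.mpr hne
  have h1 : Complex.abs (y₁ - y₂) < 1 := by
    have : dist y₁ y₂ ≤ dist y₁ x + dist x y₂ := dist_triangle _ _ _
    rw [Complex.dist_eq] at this
    rw [dist_comm] at hy₂U
    linarith [hy₂U, hy₁U, Complex.abs_apply' (y₁ - y₂)]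
  linarith [hmin _ hz hz0]

lemma unit_val_ne_zero {R : Subring ℂ} (U : Rˣ) : ((U : R) : ℂ) ≠ 0 := by
  intro h
  have h1 : ((U : R) : ℂ) * ((U⁻¹ : Rˣ) : R) = 1 := by
    have : ((U * U⁻¹ : Rˣ) : R) = (1 : R) := by
      have h0 : U * U⁻¹ = 1 := by group
      rw [h0]; rfl
    calc ((U : R) : ℂ) * ((U⁻¹ : Rˣ) : R) = (((U : R) * ((U⁻¹ : Rˣ) : R) : R) : ℂ) := by norm_cast
    _ = ((1 : R) : ℂ) := by exact_mod_cast congrArg (fun r : R => (r : ℂ)) this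
    _ = 1 := by norm_cast
  rw [h, zero_mul] at h1
  exact zero_ne_one h1

lemma unit_abs_pos {R : Subring ℂ} (U : Rˣ) : 0 < Complex.abs ((U : R) : ℂ) :=
  Complex.abs.pos_iff.mpr (unit_val_ne_zero U)

lemma unit_pow_val {R : Subring ℂ} (U : Rˣ) (n : ℕ) :
    (((U ^ n : Rˣ) : R) : ℂ) = (((U : R) : ℂ)) ^ n := by
  norm_cast

lemma units_infinite_of_abs_ne_one {R : Subring ℂ} (U : Rˣ)
    (h1 : Complex.abs ((U : R) : ℂ) ≠ 1) : Infinite Rˣ := by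
  set A := Complex.abs ((U : R) : ℂ) with hA
  have hApos : 0 < A := unit_abs_pos U
  have hlog : Real.log A ≠ 0 := by
    intro h
    rcases Real.log_eq_zero.mp h with h | h | h
    · linarith
    · exact h1 h
    · linarith
  apply Infinite.of_injective (fun n : ℕ => U ^ n)
  intro a b hab
  simp only at hab
  have hval : (((U ^ a : Rˣ) : R) : ℂ) = (((U ^ b : Rˣ) : R) : ℂ) := by rw [hab]
  rw [unit_pow_val, unit_pow_val] at hval
  have habs : A ^ a = A ^ b := by
    rw [hA, ← map_pow, ← map_pow, hval]
  have := congrArg Real.log habs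
  rw [Real.log_pow, Real.log_pow] at this
  have : (a : ℝ) = b := by
    have h2 : ((a : ℝ) - b) * Real.log A = 0 := by linarith
    rcases mul_eq_zero.mp h2 with h | h
    · linarith
    · exact absurd h hlog
  exact_mod_cast this

lemma units_finite_of_discrete (R : Subring ℂ)
    (hdisc : ∀ x : ℂ, ¬ AccPt x (Filter.principal (R : Set ℂ))) : Finite Rˣ := by
  by_contra hfin
  rw [not_finite_iff_infinite] at hfin
  by_cases hall : ∀ U : Rˣ, Complex.abs ((U : R) : ℂ) = 1
  · -- all units on the unit circle; Bolzano-Weierstrass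
    have f := Infinite.natEmbedding Rˣ
    set x : ℕ → ℂ := fun n => ((f n : R) : ℂ) with hx
    have hxinj : Function.Injective x := by
      intro a b hab
      apply f.injective
      exact Units.ext (Subtype.ext hab)
    have hxmem : ∀ n, x n ∈ Metric.sphere (0 : ℂ) 1 := by
      intro n
      rw [Metric.mem_sphere, Complex.dist_eq, sub_zero]
      exact hall (f n)
    obtain ⟨a, _, φ, hφ, hlim⟩ :=
      tendsto_subseq_of_bounded (Metric.isBounded_sphere (x := (0:ℂ)) (r := 1)) hxmem
    apply hdisc a
    rw [accPt_iff_nhds]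
    intro U hU
    have hev : ∀ᶠ n in Filter.atTop, (x ∘ φ) n ∈ U := hlim.eventually_mem hU
    obtain ⟨N, hN⟩ := Filter.eventually_atTop.mp hev
    have hne : x (φ N) ≠ x (φ (N + 1)) := by
      intro h
      have := hxinj h
      have := hφ.injective this
      omega
    rcases eq_or_ne (x (φ N)) a with h | h
    · exact ⟨x (φ (N + 1)), ⟨hN (N + 1) (by omega), Subtype.coe_prop _⟩, by rw [← h]; exact hne.symm⟩
    · exact ⟨x (φ N), ⟨hN N le_rfl, Subtype.coe_prop _⟩, h⟩
  · -- some unit off the circle: powers accumulate at 0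
    push_neg at hall
    obtain ⟨U, hU⟩ := hall
    -- choose V with |V| < 1
    have : ∃ V : Rˣ, Complex.abs ((V : R) : ℂ) < 1 := by
      rcases lt_or_gt_of_ne hU with h | h
      · exact ⟨U, h⟩
      · refine ⟨U⁻¹, ?_⟩
        have hmul : ((U : R) : ℂ) * ((U⁻¹ : Rˣ) : R) = 1 := by
          have h0 : ((U * U⁻¹ : Rˣ) : R) = (1 : R) := by
            have : U * U⁻¹ = 1 := by group
            rw [this]; rfl
          calc ((U : R) : ℂ) * ((U⁻¹ : Rˣ) : R)
              = (((U : R) * ((U⁻¹ : Rˣ) : R) : R) : ℂ) := by norm_cast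
            _ = ((1 : R) : ℂ) := by exact_mod_cast congrArg (fun r : R => (r : ℂ)) h0
            _ = 1 := by norm_cast
        have habs : Complex.abs ((U : R) : ℂ) * Complex.abs ((U⁻¹ : Rˣ) : R) = 1 := by
          rw [← map_mul, hmul, map_one]
        nlinarith [unit_abs_pos U⁻¹, unit_abs_pos U]
    obtain ⟨V, hV⟩ := this
    apply hdisc 0
    rw [accPt_iff_nhds]
    intro W hW
    obtain ⟨ε, hε, hball⟩ := Metric.mem_nhds_iff.mp hW
    obtain ⟨n, hn⟩ := exists_pow_lt_of_lt_one hε hV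
    refine ⟨(((V ^ n : Rˣ) : R) : ℂ), ⟨hball ?_, Subtype.coe_prop _⟩, ?_⟩
    · rw [Metric.mem_ball, Complex.dist_eq, sub_zero, unit_pow_val, norm_pow]
      exact hn
    · exact unit_val_ne_zero (V ^ n)

lemma mem_closure_zeta {ζ : ℂ} : ζ ∈ Subring.closure ({ζ} : Set ℂ) :=
  Subring.subset_closure rfl

lemma units_infinite_of_uv {R : Subring ℂ} {u v : ℂ} (hu : u ∈ R) (hv : v ∈ R)
    (huv : u * v = 1) (habs : Complex.abs u ≠ 1) : Infinite Rˣ := by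
  have h : (⟨u, hu⟩ : R) * ⟨v, hv⟩ = 1 := Subtype.ext (by simpa using huv)
  set U : Rˣ := Units.mkOfMulEqOne _ _ h with hU
  have hval : ((U : R) : ℂ) = u := rfl
  exact units_infinite_of_abs_ne_one U (by rw [hval]; exact habs)

lemma units_infinite_of_bad {d : ℕ} {ζ : ℂ} (hd : 1 ≤ d) (hζ : ζ ^ d = 1)
    (hprim : ∀ k : ℕ, 1 ≤ k → k < d → ζ ^ k ≠ 1)
    (hbad : d ∉ ({1, 2, 3, 4, 6} : Set ℕ)) :
    Infinite (Subring.closure ({ζ} : Set ℂ))ˣ := by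
  simp only [Set.mem_insert_iff, Set.mem_singleton_iff, not_or] at hbad
  obtain ⟨hd1, hd2, hd3, hd4, hd6⟩ := hbad
  have hz0 : ζ ≠ 0 := zeta_ne_zero hd hζ
  have habs1 : Complex.abs ζ = 1 := zeta_abs hd hζ
  have hw : ζ * (starRingEnd ℂ) ζ = 1 := by
    rw [Complex.mul_conj]; norm_cast; rw [← Complex.sq_abs, habs1]; norm_num
  set w := (starRingEnd ℂ) ζ with hwdef
  have horder : ∀ k : ℕ, ζ ^ k = 1 → d ∣ k := zeta_order hd hζ hprim
  have hzmem : ζ ∈ Subring.closure ({ζ} : Set ℂ) := mem_closure_zeta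
  by_cases h4 : 4 ∣ d
  · -- Case B : 4 ∣ d, so d ≥ 8
    obtain ⟨m, rfl⟩ := h4
    have hm2 : 2 ≤ m := by omega
    set k : ℕ := 2 * m - 1 with hk
    have hk3 : 3 ≤ k := by omega
    have hkd : k < 4 * m := by omega
    set u : ℂ := ∑ j ∈ Finset.range k, ζ ^ j with hu
    set v : ℂ := ∑ j ∈ Finset.range k, (ζ ^ k) ^ j with hv
    have humem : u ∈ Subring.closure ({ζ} : Set ℂ) :=
      Subring.sum_mem _ (fun j _ => Subring.pow_mem _ hzmem j)
    have hvmem : v ∈ Subring.closure ({ζ} : Set ℂ) :=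
      Subring.sum_mem _ (fun j _ => Subring.pow_mem _ (Subring.pow_mem _ hzmem k) j)
    have h1 : u * (ζ - 1) = ζ ^ k - 1 := geom_sum_mul ζ k
    have hkk : ζ ^ (k * k) = ζ := by
      have hkkeq : k * k = (4 * m) * (m - 1) + 1 := by
        obtain ⟨m', rfl⟩ : ∃ m', m = m' + 2 := ⟨m - 2, by omega⟩
        have h1 : k = 2 * m' + 3 := by omega
        have h2 : (m' + 2) - 1 = m' + 1 := rfl
        rw [h1, h2]
        ring
      rw [hkkeq, pow_add, pow_mul, hζ, one_pow, one_mul, pow_one]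
    have h2 : v * (ζ ^ k - 1) = ζ - 1 := by
      have := geom_sum_mul (ζ ^ k) k
      rw [← pow_mul, hkk] at this
      exact this
    have hζ1 : ζ - 1 ≠ 0 := sub_ne_zero.mpr (by simpa using hprim 1 (by norm_num) (by omega))
    have hζk : ζ ^ k - 1 ≠ 0 := sub_ne_zero.mpr (hprim k (by omega) hkd)
    have huv : u * v = 1 := by
      have h0 : (u * v - 1) * ((ζ - 1) * (ζ ^ k - 1)) = 0 := by
        linear_combination (v * (ζ ^ k - 1)) * h1 + (ζ ^ k - 1) * h2
      rcases mul_eq_zero.mp h0 with h | h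
      · linear_combination h
      · exact absurd h (mul_ne_zero hζ1 hζk)
    -- |u| ≠ 1
    have habsu : Complex.abs u ≠ 1 := by
      intro hau
      -- |ζ^k - 1| = |ζ - 1|
      have e1 : Complex.abs (ζ ^ k - 1) = Complex.abs (ζ - 1) := by
        rw [← h1, map_mul, hau, one_mul]
      -- ζ^(2m) = -1
      have hhalf : ζ ^ (2 * m) = -1 := by
        have hsq : (ζ ^ (2 * m) - 1) * (ζ ^ (2 * m) + 1) = 0 := by
          have : (ζ ^ (2 * m)) ^ 2 = 1 := by
            rw [← pow_mul]
            have : 2 * m * 2 = 4 * m := by ring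
            rw [this, hζ]
          linear_combination this
        rcases mul_eq_zero.mp hsq with h | h
        · exact absurd (sub_eq_zero.mp h) (hprim (2 * m) (by omega) (by omega))
        · linear_combination h
      have hk1 : ζ ^ k * ζ = -1 := by
        rw [← pow_succ]
        have : k + 1 = 2 * m := by omega
        rw [this, hhalf]
      -- |ζ^k - 1| = |ζ + 1|
      have e2 : Complex.abs (ζ ^ k - 1) = Complex.abs (ζ + 1) := by
        have hmul : (ζ ^ k - 1) * ζ = -(1 + ζ) := by linear_combination hk1
        have := congrArg Complex.abs hmul
        rw [map_mul, habs1, mul_one, map_neg_eq_map] at this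
        rw [this]
        ring_nf
      -- so |ζ+1| = |ζ-1|, derive ζ + w = 0
      have e3 : Complex.normSq (ζ + 1) = Complex.normSq (ζ - 1) := by
        rw [← Complex.sq_abs, ← Complex.sq_abs, ← e2, e1]
      have e4 : (ζ + 1) * (w + 1) = (ζ - 1) * (w - 1) := by
        have l1 : (ζ + 1) * (w + 1) = (Complex.normSq (ζ + 1) : ℂ) := by
          rw [← Complex.mul_conj]; simp [hwdef]
        have l2 : (ζ - 1) * (w - 1) = (Complex.normSq (ζ - 1) : ℂ) := by
          rw [← Complex.mul_conj]; simp [hwdef]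
        rw [l1, l2, e3]
      have e5 : w = -ζ := by linear_combination e4 / 2
      have e6 : ζ ^ 2 = -1 := by
        rw [e5] at hw
        linear_combination -hw
      have e7 : ζ ^ 4 = 1 := by
        have : ζ ^ 4 = (ζ ^ 2) ^ 2 := by ring
        rw [this, e6]; ring
      have := Nat.le_of_dvd (by norm_num) (horder 4 e7)
      omega
    exact units_infinite_of_uv humem hvmem huv habsu
  · -- Case A : 4 ∤ d
    set o : ℕ := if 2 ∣ d then d / 2 else d with ho
    have hoodd : o % 2 = 1 := by
      rw [ho]
      split_ifs with h2 <;> omega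
    have ho1 : 1 ≤ o := by rw [ho]; split_ifs <;> omega
    have h2o : ζ ^ (2 * o) = 1 := by
      rw [ho]
      split_ifs with h2
      · have : 2 * (d / 2) = d := by omega
        rw [this, hζ]
      · rw [mul_comm, pow_mul, hζ, one_pow]
    set m : ℕ := (o + 1) / 2 with hm
    have h4m : 4 * m = 2 * o + 2 := by omega
    set u : ℂ := 1 + ζ ^ 2 with hu
    set v : ℂ := ∑ j ∈ Finset.range m, (ζ ^ 4) ^ j with hv
    have humem : u ∈ Subring.closure ({ζ} : Set ℂ) :=
      Subring.add_mem _ (Subring.one_mem _) (Subring.pow_mem _ hzmem 2)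
    have hvmem : v ∈ Subring.closure ({ζ} : Set ℂ) :=
      Subring.sum_mem _ (fun j _ => Subring.pow_mem _ (Subring.pow_mem _ hzmem 4) j)
    have hgeom : v * (ζ ^ 4 - 1) = ζ ^ 2 - 1 := by
      have hgs := geom_sum_mul (ζ ^ 4) m
      rw [← pow_mul, h4m, pow_add, h2o, one_mul, ← hv] at hgs
      exact hgs
    have hζ2 : ζ ^ 2 - 1 ≠ 0 := sub_ne_zero.mpr (hprim 2 (by norm_num) (by omega))
    have huv : u * v = 1 := by
      have h0 : (u * v - 1) * (ζ ^ 2 - 1) = 0 := by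
        linear_combination hgeom + (v * (ζ ^ 2 - 1)) * hu
      rcases mul_eq_zero.mp h0 with h | h
      · linear_combination h
      · exact absurd h hζ2
    have habsu : Complex.abs u ≠ 1 := by
      intro hau
      have e1 : u * ((starRingEnd ℂ) u) = 1 := by
        rw [Complex.mul_conj]
        norm_cast
        rw [← Complex.sq_abs, hau]; norm_num
      have e2 : (starRingEnd ℂ) u = 1 + w ^ 2 := by rw [hu]; simp [hwdef]
      rw [e2, hu] at e1
      -- (1+ζ²)(1+w²) = 1 with ζw = 1 : multiply out, get ζ⁴ + ζ² + 1 = 0 after mult by ζ²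
      have e3 : ζ ^ 4 + ζ ^ 2 + 1 = 0 := by
        linear_combination (ζ ^ 2) * e1 - (1 + ζ * w) * (1 + ζ ^ 2) * hw
      have e4 : ζ ^ 6 = 1 := by
        linear_combination (ζ^2 - 1) * e3
      have hd6' := Nat.le_of_dvd (by norm_num) (horder 6 e4)
      have := horder 6 e4
      interval_cases d <;> omega
    exact units_infinite_of_uv humem hvmem huv habsu

lemma unit_val_ne_zero' {R : Subring ℂ} (U : Rˣ) : ((U : R) : ℂ) ≠ 0 := by
  intro h
  have h0 : ((U * U⁻¹ : Rˣ) : R) = (1 : R) := by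
    have : U * U⁻¹ = 1 := by group
    rw [this]; rfl
  have h1 : ((U : R) : ℂ) * (((U⁻¹ : Rˣ) : R) : ℂ) = 1 := by
    calc ((U : R) : ℂ) * ((U⁻¹ : Rˣ) : R)
        = (((U : R) * ((U⁻¹ : Rˣ) : R) : R) : ℂ) := by norm_cast
      _ = ((1 : R) : ℂ) := by exact_mod_cast congrArg (fun r : R => (r : ℂ)) h0
      _ = 1 := by norm_cast
  rw [h, zero_mul] at h1
  exact zero_ne_one h1

lemma unit_val_mul_inv_val {R : Subring ℂ} (U : Rˣ) :
    ((U : R) : ℂ) * (((U⁻¹ : Rˣ) : R) : ℂ) = 1 := by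
  have h0 : ((U * U⁻¹ : Rˣ) : R) = (1 : R) := by
    have : U * U⁻¹ = 1 := by group
    rw [this]; rfl
  calc ((U : R) : ℂ) * ((U⁻¹ : Rˣ) : R)
      = (((U : R) * ((U⁻¹ : Rˣ) : R) : R) : ℂ) := by norm_cast
    _ = ((1 : R) : ℂ) := by exact_mod_cast congrArg (fun r : R => (r : ℂ)) h0
    _ = 1 := by norm_cast

noncomputable def friezeDiag {R : Subring ℂ} (U : Rˣ) : ℤ → ℂ :=
  fun i => if Even i then ((U : R) : ℂ) else 2 * (((U⁻¹ : Rˣ) : R) : ℂ)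

lemma friezeDiag_mem {R : Subring ℂ} (U : Rˣ) (i : ℤ) :
    friezeDiag U i ∈ (R : Set ℂ) \ {0} := by
  unfold friezeDiag
  split_ifs
  · exact ⟨Subtype.coe_prop _, unit_val_ne_zero' U⟩
  · refine ⟨Subring.mul_mem _ ?_ (Subtype.coe_prop _),
      mul_ne_zero two_ne_zero (unit_val_ne_zero' U⁻¹)⟩
    have h2 : (2:ℂ) = 1 + 1 := by norm_num
    rw [h2]
    exact add_mem (Subring.one_mem R) (Subring.one_mem R)

lemma friezeDiag_mul {R : Subring ℂ} (U : Rˣ) (i : ℤ) :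
    friezeDiag U i * friezeDiag U (i + 1) = 2 := by
  unfold friezeDiag
  rcases Int.even_or_odd i with h | h
  · rw [if_pos h, if_neg (by simp [Int.even_add_one, h])]
    rw [← mul_assoc, mul_comm _ (2:ℂ), mul_assoc, unit_val_mul_inv_val]; ring
  · rw [if_neg (by simp [Int.not_even_iff_odd.mpr h]),
      if_pos (by simp [Int.even_add_one, Int.not_even_iff_odd.mpr h, h])]
    rw [mul_comm, ← mul_assoc, mul_comm _ (2:ℂ), mul_assoc, unit_val_mul_inv_val]; ring

noncomputable def friezeOfUnit {R : Subring ℂ} (U : Rˣ) : ℤ × ℤ → ℂ :=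
  fun p =>
    if p.2 = p.1 + 2 then friezeDiag U p.1
    else if p.2 = p.1 then 0
    else if p.2 = p.1 + 1 then 1
    else if p.2 = p.1 + 3 then 1
    else 0

lemma fou_e0 {R : Subring ℂ} (U : Rˣ) (i j : ℤ) (h : j = i) : friezeOfUnit U (i, j) = 0 := by
  subst h; simp only [friezeOfUnit]
  rw [if_neg (by omega), if_pos trivial]

lemma fou_e1 {R : Subring ℂ} (U : Rˣ) (i j : ℤ) (h : j = i + 1) : friezeOfUnit U (i, j) = 1 := by
  subst h; simp only [friezeOfUnit]
  rw [if_neg (by omega), if_neg (by omega), if_pos trivial]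

lemma fou_e2 {R : Subring ℂ} (U : Rˣ) (i j : ℤ) (h : j = i + 2) :
    friezeOfUnit U (i, j) = friezeDiag U i := by
  subst h; simp only [friezeOfUnit]
  rw [if_pos trivial]

lemma fou_e3 {R : Subring ℂ} (U : Rˣ) (i j : ℤ) (h : j = i + 3) : friezeOfUnit U (i, j) = 1 := by
  subst h; simp only [friezeOfUnit]
  rw [if_neg (by omega), if_neg (by omega), if_neg (by omega), if_pos trivial]

lemma fou_e4 {R : Subring ℂ} (U : Rˣ) (i j : ℤ) (h : j = i + 4) : friezeOfUnit U (i, j) = 0 := by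
  subst h; simp only [friezeOfUnit]
  rw [if_neg (by omega), if_neg (by omega), if_neg (by omega), if_neg (by omega)]

lemma friezeOfUnit_isFrieze {R : Subring ℂ} (U : Rˣ) :
    IsFrieze 1 ((R : Set ℂ) \ {0}) (friezeOfUnit U) := by
  refine ⟨?_, ?_, ?_, ?_, ?_, ?_⟩
  · intro i; exact fou_e0 U i i rfl
  · intro i; exact fou_e1 U i _ rfl
  · intro i; exact fou_e3 U i _ (by push_cast; ring)
  · intro i; exact fou_e4 U i _ (by push_cast; ring)
  · intro i j h1 h2
    have hj : j = i + 2 := by omega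
    rw [fou_e2 U i j hj]
    exact friezeDiag_mem U i
  · intro i j h1 h2
    have key := friezeDiag_mul U i
    have hj : j = i + 1 ∨ j = i + 2 ∨ j = i + 3 := by omega
    rcases hj with rfl | rfl | rfl
    · rw [fou_e1 U i _ rfl, fou_e1 U (i+1) _ (by ring), fou_e2 U i _ (by ring),
        fou_e0 U (i+1) _ rfl]
      ring
    · rw [fou_e2 U i _ rfl, fou_e2 U (i+1) _ (by ring), fou_e3 U i _ (by ring),
        fou_e1 U (i+1) _ (by ring)]
      linear_combination key
    · rw [fou_e3 U i _ rfl, fou_e3 U (i+1) _ (by ring), fou_e4 U i _ (by ring),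
        fou_e2 U (i+1) _ (by ring)]
      ring

lemma friezeDiag_zero {R : Subring ℂ} (U : Rˣ) : friezeDiag U 0 = ((U : R) : ℂ) := by
  unfold friezeDiag
  rw [if_pos Even.zero]

lemma units_finite_of_frieze_finite (R : Subring ℂ)
    (hfin : {g : {p : ℤ × ℤ // p.1 ≤ p.2 ∧ p.2 ≤ p.1 + (1 : ℕ) + 3} → ℂ |
      ∃ c : ℤ × ℤ → ℂ, IsFrieze 1 ((R : Set ℂ) \ {0}) c ∧ ∀ p, g p = c p.1}.Finite) :
    Finite Rˣ := by
  have hsub := hfin.to_subtype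
  apply Finite.of_injective (fun U : Rˣ =>
    (⟨fun p => friezeOfUnit U p.1,
      ⟨friezeOfUnit U, friezeOfUnit_isFrieze U, fun p => rfl⟩⟩ :
      ↥{g : {p : ℤ × ℤ // p.1 ≤ p.2 ∧ p.2 ≤ p.1 + (1 : ℕ) + 3} → ℂ |
      ∃ c : ℤ × ℤ → ℂ, IsFrieze 1 ((R : Set ℂ) \ {0}) c ∧ ∀ p, g p = c p.1}))
  intro U V h
  have h2 := congrArg (fun g : ↥{g : {p : ℤ × ℤ // p.1 ≤ p.2 ∧ p.2 ≤ p.1 + (1 : ℕ) + 3} → ℂ |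
      ∃ c : ℤ × ℤ → ℂ, IsFrieze 1 ((R : Set ℂ) \ {0}) c ∧ ∀ p, g p = c p.1} =>
      g.1 ⟨((0 : ℤ), (2 : ℤ)), by norm_num⟩) h
  simp only at h2
  rw [fou_e2 U 0 2 (by norm_num), fou_e2 V 0 2 (by norm_num),
    friezeDiag_zero, friezeDiag_zero] at h2
  exact Units.ext (Subtype.ext h2)

lemma frieze_ge_one {R : Subring ℂ} (hmin : ∀ x ∈ R, x ≠ 0 → 1 ≤ Complex.abs x)
    {n : ℕ} {c : ℤ × ℤ → ℂ} (hf : IsFrieze n ((R : Set ℂ) \ {0}) c) :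
    ∀ i j : ℤ, i + 1 ≤ j → j ≤ i + n + 2 → 1 ≤ Complex.abs (c (i, j)) ∧ c (i, j) ≠ 0 := by
  obtain ⟨h0, h1, h2, h3, hmem, hdet⟩ := hf
  intro i j hj1 hj2
  rcases eq_or_lt_of_le hj1 with heq | hlt
  · rw [← heq, h1 i]
    norm_num
  rcases eq_or_lt_of_le hj2 with heq | hlt2
  · rw [heq, h2 i]
    norm_num
  · have hm := hmem i j (by omega) (by omega)
    obtain ⟨hmR, hm0⟩ := hm
    simp only [Set.mem_singleton_iff] at hm0
    exact ⟨hmin _ hmR hm0, hm0⟩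

lemma frieze_bound_step {R : Subring ℂ} (hmin : ∀ x ∈ R, x ≠ 0 → 1 ≤ Complex.abs x)
    {n : ℕ} {c : ℤ × ℤ → ℂ} (hf : IsFrieze n ((R : Set ℂ) \ {0}) c) :
    ∀ t : ℕ, t ≤ n + 1 → ∀ i j : ℤ, j = i + (n : ℤ) + 3 - t →
      Complex.abs (c (i, j)) ≤ t * Complex.abs (c (i + 1, j)) := by
  intro t
  induction t with
  | zero =>
      intro _ i j hj
      obtain ⟨h0, h1, h2, h3, hmem, hdet⟩ := hf
      have : j = i + (n : ℤ) + 3 := by omega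
      rw [this, h3 i]
      norm_num
  | succ t ih =>
      intro ht i j hj
      obtain ⟨h0, h1, h2, h3, hmem, hdet⟩ := hf
      have hdet1 := hdet i j (by omega) (by omega)
      have e : c (i, j) * c (i + 1, j + 1) = 1 + c (i, j + 1) * c (i + 1, j) := by
        linear_combination hdet1
      have geA := (frieze_ge_one hmin ⟨h0, h1, h2, h3, hmem, hdet⟩ (i + 1) (j + 1)
        (by omega) (by omega)).1
      have geB := (frieze_ge_one hmin ⟨h0, h1, h2, h3, hmem, hdet⟩ (i + 1) j
        (by omega) (by omega)).1
      have hIH := ih (by omega) i (j + 1) (by omega)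
      set X := Complex.abs (c (i, j)) with hX
      set A := Complex.abs (c (i + 1, j + 1)) with hA
      set B := Complex.abs (c (i + 1, j)) with hB
      set Y := Complex.abs (c (i, j + 1)) with hY
      have habs : X * A ≤ 1 + Y * B := by
        rw [hX, hA, hY, hB, ← map_mul, e]
        refine le_trans (Complex.abs.add_le _ _) ?_
        rw [map_one, map_mul]
      have hB0 : (0 : ℝ) ≤ B := Complex.abs.nonneg _
      have hYB : Y * B ≤ (t : ℝ) * A * B := by
        have := mul_le_mul_of_nonneg_right hIH hB0
        linarith
      have h5 : X * A ≤ (1 + t * B) * A := by nlinarith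
      have h6 : X ≤ 1 + t * B := le_of_mul_le_mul_right h5 (by linarith)
      have : ((t + 1 : ℕ) : ℝ) = (t : ℝ) + 1 := by push_cast; ring
      rw [this]
      nlinarith

lemma frieze_bound {R : Subring ℂ} (hmin : ∀ x ∈ R, x ≠ 0 → 1 ≤ Complex.abs x)
    {n : ℕ} {c : ℤ × ℤ → ℂ} (hf : IsFrieze n ((R : Set ℂ) \ {0}) c) (hn : 1 ≤ n) :
    ∀ k : ℕ, k ≤ n + 1 → ∀ i j : ℤ, j = i + (k : ℤ) →
      Complex.abs (c (i, j)) ≤ ((n : ℝ) + 1) ^ k := by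
  intro k
  induction k with
  | zero =>
      intro _ i j hj
      obtain ⟨h0, h1, h2, h3, hmem, hdet⟩ := hf
      have : j = i := by omega
      rw [this, h0 i]
      norm_num
  | succ k ih =>
      intro hk i j hj
      rcases Nat.eq_zero_or_pos k with rfl | hk1
      · obtain ⟨h0, h1, h2, h3, hmem, hdet⟩ := hf
        have : j = i + 1 := by omega
        rw [this, h1 i, map_one]
        have he : ((n : ℝ) + 1) ^ (0 + 1) = (n : ℝ) + 1 := by ring
        rw [he]
        have := Nat.cast_nonneg (α := ℝ) n
        linarith
      · have hQ := frieze_bound_step hmin hf (n + 2 - k) (by omega) i j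
          (by push_cast [Nat.cast_sub (by omega : k ≤ n + 2)]; omega)
        have hIH := ih (by omega) (i + 1) j (by omega)
        have hnn : ((n + 2 - k : ℕ) : ℝ) ≤ (n : ℝ) + 1 := by
          have : (n + 2 - k : ℕ) ≤ n + 1 := by omega
          exact_mod_cast this
        have hpow : (0:ℝ) ≤ ((n : ℝ) + 1) ^ k := by positivity
        calc Complex.abs (c (i, j)) ≤ ((n + 2 - k : ℕ) : ℝ) * Complex.abs (c (i + 1, j)) := hQ
          _ ≤ ((n : ℝ) + 1) * ((n : ℝ) + 1) ^ k := by
              have h1 := Complex.abs.nonneg (c (i + 1, j))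
              nlinarith
          _ = ((n : ℝ) + 1) ^ (k + 1) := by ring

lemma frieze_band_bound {R : Subring ℂ} (hmin : ∀ x ∈ R, x ≠ 0 → 1 ≤ Complex.abs x)
    {n : ℕ} {c : ℤ × ℤ → ℂ} (hf : IsFrieze n ((R : Set ℂ) \ {0}) c) (hn : 1 ≤ n) :
    ∀ i j : ℤ, i ≤ j → j ≤ i + n + 3 →
      Complex.abs (c (i, j)) ≤ ((n : ℝ) + 1) ^ (n + 1) := by
  intro i j hij hijn
  have hbase : (1:ℝ) ≤ (n : ℝ) + 1 := by
    have := Nat.cast_nonneg (α := ℝ) n; linarith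
  rcases le_or_gt (j - i) (n + 1) with hle | hgt
  · obtain ⟨k, hk⟩ : ∃ k : ℕ, j = i + (k : ℤ) := ⟨(j - i).toNat, by omega⟩
    have hkle : k ≤ n + 1 := by omega
    calc Complex.abs (c (i, j)) ≤ ((n : ℝ) + 1) ^ k := frieze_bound hmin hf hn k hkle i j hk
      _ ≤ ((n : ℝ) + 1) ^ (n + 1) := by
          exact pow_le_pow_right₀ hbase hkle
  · obtain ⟨h0, h1, h2, h3, hmem, hdet⟩ := hf
    have : j = i + (n : ℤ) + 2 ∨ j = i + (n : ℤ) + 3 := by omega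
    rcases this with h | h
    · rw [h, h2 i]
      simpa using one_le_pow₀ hbase
    · rw [h, h3 i, map_zero]
      positivity

lemma frieze_ne_zero {n : ℕ} {S : Set ℂ} (hS : ∀ x ∈ S, x ≠ 0)
    {c : ℤ × ℤ → ℂ} (hf : IsFrieze n S c) :
    ∀ i j : ℤ, i + 1 ≤ j → j ≤ i + n + 2 → c (i, j) ≠ 0 := by
  obtain ⟨h0, h1, h2, h3, hmem, hdet⟩ := hf
  intro i j hj1 hj2
  rcases eq_or_lt_of_le hj1 with heq | hlt
  · rw [← heq, h1 i]; norm_num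
  rcases eq_or_lt_of_le hj2 with heq | hlt2
  · rw [heq, h2 i]; norm_num
  · exact hS _ (hmem i j (by omega) (by omega))

lemma frieze_step_up {n : ℕ} {S : Set ℂ} (hS : ∀ x ∈ S, x ≠ 0)
    {c₁ c₂ : ℤ × ℤ → ℂ} (hf₁ : IsFrieze n S c₁) (hf₂ : IsFrieze n S c₂) (i : ℤ)
    (hP : ∀ j : ℤ, i ≤ j → j ≤ i + n + 3 → c₁ (i, j) = c₂ (i, j)) :
    ∀ j : ℤ, i + 1 ≤ j → j ≤ i + 1 + n + 3 → c₁ (i + 1, j) = c₂ (i + 1, j) := by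
  obtain ⟨h0₁, h1₁, h2₁, h3₁, hmem₁, hdet₁⟩ := hf₁
  obtain ⟨h0₂, h1₂, h2₂, h3₂, hmem₂, hdet₂⟩ := hf₂
  have claim : ∀ k : ℕ, (k : ℤ) ≤ (n : ℤ) + 2 → ∀ j : ℤ, j = i + 1 + (k : ℤ) →
      c₁ (i + 1, j) = c₂ (i + 1, j) := by
    intro k
    induction k with
    | zero =>
        intro _ j hj
        have : j = i + 1 := by omega
        rw [this, h0₁, h0₂]
    | succ k ih =>
        intro hk j hj
        have hj' : j - 1 = i + 1 + (k : ℤ) := by push_cast at hj ⊢; omega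
        set j' := j - 1 with hjdef
        have hd₁ := hdet₁ i j' (by omega) (by omega)
        have hd₂ := hdet₂ i j' (by omega) (by omega)
        have ea : c₁ (i, j') = c₂ (i, j') := hP j' (by omega) (by omega)
        have eb : c₁ (i, j' + 1) = c₂ (i, j' + 1) := hP (j' + 1) (by omega) (by omega)
        have ey : c₁ (i + 1, j') = c₂ (i + 1, j') := ih (by omega) j' hj'
        have hane : c₁ (i, j') ≠ 0 :=
          frieze_ne_zero hS ⟨h0₁, h1₁, h2₁, h3₁, hmem₁, hdet₁⟩ i j' (by omega) (by omega)
        have e₁ : c₁ (i, j') * c₁ (i + 1, j' + 1) = 1 + c₁ (i, j' + 1) * c₁ (i + 1, j') := by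
          linear_combination hd₁
        have e₂ : c₁ (i, j') * c₂ (i + 1, j' + 1) = 1 + c₁ (i, j' + 1) * c₁ (i + 1, j') := by
          rw [ea, eb, ey]
          linear_combination hd₂
        have : c₁ (i + 1, j' + 1) = c₂ (i + 1, j' + 1) :=
          mul_left_cancel₀ hane (e₁.trans e₂.symm)
        have hjj : j' + 1 = j := by omega
        rw [hjj] at this
        exact this
  intro j hj1 hj2
  rcases eq_or_lt_of_le hj2 with heq | hlt
  · have : j = i + 1 + (n : ℤ) + 3 := by omega
    rw [this, h3₁, h3₂]
  · obtain ⟨k, hk⟩ : ∃ k : ℕ, j = i + 1 + (k : ℤ) := ⟨(j - i - 1).toNat, by omega⟩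
    exact claim k (by omega) j hk

lemma frieze_step_dn {n : ℕ} {S : Set ℂ} (hS : ∀ x ∈ S, x ≠ 0)
    {c₁ c₂ : ℤ × ℤ → ℂ} (hf₁ : IsFrieze n S c₁) (hf₂ : IsFrieze n S c₂) (i : ℤ)
    (hP : ∀ j : ℤ, i ≤ j → j ≤ i + n + 3 → c₁ (i, j) = c₂ (i, j)) :
    ∀ j : ℤ, i - 1 ≤ j → j ≤ i - 1 + n + 3 → c₁ (i - 1, j) = c₂ (i - 1, j) := by
  obtain ⟨h0₁, h1₁, h2₁, h3₁, hmem₁, hdet₁⟩ := hf₁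
  obtain ⟨h0₂, h1₂, h2₂, h3₂, hmem₂, hdet₂⟩ := hf₂
  set i' := i - 1 with hi'
  have claim : ∀ k : ℕ, (k : ℤ) ≤ (n : ℤ) + 2 → ∀ j : ℤ, j = i' + (n : ℤ) + 3 - (k : ℤ) →
      c₁ (i', j) = c₂ (i', j) := by
    intro k
    induction k with
    | zero =>
        intro _ j hj
        have : j = i' + (n : ℤ) + 3 := by omega
        rw [this, h3₁, h3₂]
    | succ k ih =>
        intro hk j hj
        have hd₁ := hdet₁ i' j (by omega) (by omega)
        have hd₂ := hdet₂ i' j (by omega) (by omega)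
        have hi1 : i' + 1 = i := by omega
        have eX : c₁ (i' + 1, j + 1) = c₂ (i' + 1, j + 1) := by
          rw [hi1]; exact hP (j + 1) (by omega) (by omega)
        have eY : c₁ (i' + 1, j) = c₂ (i' + 1, j) := by
          rw [hi1]; exact hP j (by omega) (by omega)
        have eb : c₁ (i', j + 1) = c₂ (i', j + 1) := ih (by omega) (j + 1) (by push_cast at hj ⊢; omega)
        have hXne : c₂ (i' + 1, j + 1) ≠ 0 :=
          frieze_ne_zero hS ⟨h0₂, h1₂, h2₂, h3₂, hmem₂, hdet₂⟩ (i' + 1) (j + 1)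
            (by omega) (by omega)
        have e₁ : c₁ (i', j) * c₂ (i' + 1, j + 1) = 1 + c₂ (i', j + 1) * c₂ (i' + 1, j) := by
          rw [← eX, ← eb, ← eY]
          linear_combination hd₁
        have e₂ : c₂ (i', j) * c₂ (i' + 1, j + 1) = 1 + c₂ (i', j + 1) * c₂ (i' + 1, j) := by
          linear_combination hd₂
        exact mul_right_cancel₀ hXne (e₁.trans e₂.symm)
  intro j hj1 hj2
  rcases eq_or_lt_of_le hj1 with heq | hlt
  · rw [← heq, h0₁, h0₂]
  · obtain ⟨k, hk⟩ : ∃ k : ℕ, j = i' + (n : ℤ) + 3 - (k : ℤ) :=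
      ⟨(i' + n + 3 - j).toNat, by omega⟩
    exact claim k (by omega) j hk

lemma frieze_determined {n : ℕ} {S : Set ℂ} (hS : ∀ x ∈ S, x ≠ 0)
    {c₁ c₂ : ℤ × ℤ → ℂ} (hf₁ : IsFrieze n S c₁) (hf₂ : IsFrieze n S c₂)
    (hrow0 : ∀ j : ℤ, 0 ≤ j → j ≤ (n : ℤ) + 3 → c₁ (0, j) = c₂ (0, j)) :
    ∀ i j : ℤ, i ≤ j → j ≤ i + n + 3 → c₁ (i, j) = c₂ (i, j) := by
  have main : ∀ i : ℤ, ∀ j : ℤ, i ≤ j → j ≤ i + n + 3 → c₁ (i, j) = c₂ (i, j) := by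
    intro i
    induction i using Int.induction_on with
    | zero => intro j h1 h2; exact hrow0 j h1 (by omega)
    | succ k ih => exact frieze_step_up hS hf₁ hf₂ k ih
    | pred k ih =>
        have := frieze_step_dn hS hf₁ hf₂ (-(k : ℤ)) ih
        intro j h1 h2
        exact this j (by omega) (by omega)
  exact main

lemma friezes_finite {R : Subring ℂ} (hmin : ∀ x ∈ R, x ≠ 0 → 1 ≤ Complex.abs x)
    (hbox : ∀ B : ℝ, {x : ℂ | x ∈ R ∧ Complex.abs x ≤ B}.Finite)
    (n : ℕ) (hn : 1 ≤ n) :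
    {g : {p : ℤ × ℤ // p.1 ≤ p.2 ∧ p.2 ≤ p.1 + n + 3} → ℂ |
      ∃ c : ℤ × ℤ → ℂ, IsFrieze n ((R : Set ℂ) \ {0}) c ∧ ∀ p, g p = c p.1}.Finite := by
  set B : ℝ := ((n : ℝ) + 1) ^ (n + 1) with hB
  have hB1 : (1 : ℝ) ≤ B := by
    apply one_le_pow₀
    have := Nat.cast_nonneg (α := ℝ) n
    linarith
  set T : Set ℂ := insert 0 (insert 1 {x : ℂ | x ∈ R ∧ Complex.abs x ≤ B}) with hT
  have hTfin : T.Finite := ((hbox B).insert 1).insert 0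
  set Band := {p : ℤ × ℤ // p.1 ≤ p.2 ∧ p.2 ≤ p.1 + n + 3} with hBand
  set F : (Band → ℂ) → (Fin (n + 4) → ℂ) :=
    fun g j => g ⟨((0 : ℤ), (j.val : ℤ)),
      ⟨show (0 : ℤ) ≤ (j.val : ℤ) by exact_mod_cast Int.ofNat_nonneg j.val,
       show (j.val : ℤ) ≤ (0 : ℤ) + n + 3 by have := j.isLt; push_cast; omega⟩⟩ with hF
  have hS0 : ∀ x ∈ ((R : Set ℂ) \ {0}), x ≠ 0 := by
    intro x hx
    simpa using hx.2
  apply Set.Finite.of_finite_image (f := F)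
  · -- image is finite: contained in functions into T
    apply Set.Finite.subset (Set.Finite.pi (fun _ : Fin (n + 4) => hTfin))
    rintro h ⟨g, ⟨c, hfc, hgc⟩, rfl⟩
    rw [Set.mem_pi]
    intro j _
    obtain ⟨h0, h1, h2, h3, hmem, hdet⟩ := hfc
    have hval : F g j = c (0, (j.val : ℤ)) := by rw [hF]; exact hgc _
    rw [hval]
    have hjlt := j.isLt
    -- cases on position
    rcases eq_or_ne (j.val : ℤ) 0 with hj | hj0
    · rw [hj, show ((0:ℤ), (0:ℤ)) = ((0:ℤ), (0:ℤ)) from rfl]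
      rw [show c ((0:ℤ), (0:ℤ)) = 0 from h0 0]
      exact Set.mem_insert _ _
    rcases eq_or_ne (j.val : ℤ) 1 with hj | hj1
    · rw [hj, show c ((0:ℤ), (1:ℤ)) = 1 from by simpa using h1 0]
      exact Set.mem_insert_of_mem _ (Set.mem_insert _ _)
    rcases eq_or_ne (j.val : ℤ) ((n : ℤ) + 2) with hj | hjn2
    · rw [hj, show c ((0:ℤ), (n : ℤ) + 2) = 1 from by simpa using h2 0]
      exact Set.mem_insert_of_mem _ (Set.mem_insert _ _)
    rcases eq_or_ne (j.val : ℤ) ((n : ℤ) + 3) with hj | hjn3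
    · rw [hj, show c ((0:ℤ), (n : ℤ) + 3) = 0 from by simpa using h3 0]
      exact Set.mem_insert _ _
    · -- middle entry
      have hrange : (0:ℤ) + 2 ≤ (j.val : ℤ) ∧ (j.val : ℤ) ≤ (0:ℤ) + n + 1 := by
        push_cast
        omega
      have hmemj := hmem 0 (j.val : ℤ) hrange.1 hrange.2
      have hbnd := frieze_band_bound hmin ⟨h0, h1, h2, h3, hmem, hdet⟩ hn 0 (j.val : ℤ)
        (by omega) (by omega)
      exact Set.mem_insert_of_mem _ (Set.mem_insert_of_mem _ ⟨hmemj.1, hbnd⟩)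
  · -- injectivity on the set
    rintro g₁ ⟨c₁, hf₁, hg₁⟩ g₂ ⟨c₂, hf₂, hg₂⟩ hFeq
    have hrow0 : ∀ j : ℤ, 0 ≤ j → j ≤ (n : ℤ) + 3 → c₁ (0, j) = c₂ (0, j) := by
      intro j hj0 hj3
      have hjlt : j.toNat < n + 4 := by omega
      have hjj : ((j.toNat : ℤ)) = j := by omega
      have this2 : c₁ ((0 : ℤ), (j.toNat : ℤ)) = c₂ ((0 : ℤ), (j.toNat : ℤ)) := by
        have h := congrFun hFeq ⟨j.toNat, hjlt⟩
        rw [hF] at h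
        simp only at h
        rw [hg₁, hg₂] at h
        exact h
      rw [hjj] at this2
      exact this2
    have hall := frieze_determined hS0 hf₁ hf₂ hrow0
    funext p
    rw [hg₁, hg₂]
    exact hall p.1.1 p.1.2 p.2.1 p.2.2
lemma zeta_sq_of_cases {ζ : ℂ}
    (hcases : (ζ = 1 ∨ ζ = -1) ∨ ∃ q : ℤ, ζ ^ 2 = -1 + (q : ℂ) * ζ ∧ q ^ 2 ≤ 1) :
    ∃ p q : ℤ, ζ ^ 2 = (p : ℂ) + (q : ℂ) * ζ := by
  rcases hcases with (rfl | rfl) | ⟨q, hq, _⟩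
  · exact ⟨1, 0, by norm_num⟩
  · exact ⟨1, 0, by norm_num⟩
  · exact ⟨-1, q, by push_cast; exact hq⟩

lemma min_norm_all {d : ℕ} {ζ : ℂ} (hd : 1 ≤ d) (hζ : ζ ^ d = 1)
    (hcases : (ζ = 1 ∨ ζ = -1) ∨ ∃ q : ℤ, ζ ^ 2 = -1 + (q : ℂ) * ζ ∧ q ^ 2 ≤ 1) :
    ∀ y ∈ Subring.closure ({ζ} : Set ℂ), y ≠ 0 → 1 ≤ Complex.abs y := by
  obtain ⟨p, q, hsq⟩ := zeta_sq_of_cases hcases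
  obtain ⟨t, ht⟩ := zeta_trace hd hζ hcases
  intro y hy hy0
  obtain ⟨a, b, hy'⟩ := lattice_rep hsq y hy
  exact min_norm hd hζ ht a b hy' hy0

/-- For a primitive `d`-th root of unity `ζ`, the following are equivalent: (i) for every
`n ≥ 1`, there are only finitely many frieze patterns of height `n` over `ℤ[ζ] \ {0}`
(restricted to the band `B_n`); (ii) `ℤ[ζ]` is discrete in `ℂ`; (iii) the unit group of
`ℤ[ζ]` is finite; (iv) `d ∈ {1, 2, 3, 4, 6}`. -/
theorem stmt9 (d : ℕ) (hd : 1 ≤ d) (ζ : ℂ) (hζ : ζ ^ d = 1)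
    (hprim : ∀ k : ℕ, 1 ≤ k → k < d → ζ ^ k ≠ 1) :
    List.TFAE
      [ ∀ n : ℕ, 1 ≤ n →
          {g : {p : ℤ × ℤ // p.1 ≤ p.2 ∧ p.2 ≤ p.1 + n + 3} → ℂ |
            ∃ c : ℤ × ℤ → ℂ,
              IsFrieze n ((Subring.closure {ζ} : Set ℂ) \ {0}) c ∧
              ∀ p, g p = c p.1}.Finite,
        ∀ x : ℂ, ¬ AccPt x (Filter.principal (Subring.closure {ζ} : Set ℂ)),
        Finite (↥(Subring.closure ({ζ} : Set ℂ)))ˣ,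
        d ∈ ({1, 2, 3, 4, 6} : Set ℕ) ] := by
  tfae_have 1 → 3 := by
    intro h1
    exact units_finite_of_frieze_finite _ (h1 1 le_rfl)
  tfae_have 3 → 4 := by
    intro h3
    by_contra hbad
    haveI := units_infinite_of_bad hd hζ hprim hbad
    haveI := h3
    exact not_finite (↥(Subring.closure ({ζ} : Set ℂ)))ˣ
  tfae_have 4 → 2 := by
    intro h4 x
    exact discrete_of_min_norm (min_norm_all hd hζ (zeta_cases hd hζ hprim h4)) x
  tfae_have 2 → 3 := by
    intro h2
    exact units_finite_of_discrete _ h2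
  tfae_have 4 → 1 := by
    intro h4 n hn
    have hcases := zeta_cases hd hζ hprim h4
    exact friezes_finite (min_norm_all hd hζ hcases) (box_finite hd hζ hcases) n hn
  tfae_finish
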